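/- Let n ≥ 2, k ≥ 1, R ∈ (-1,1) and let ψ : (x,y) → ℝ (with -1 ≤ x < y ≤ 1) be a maximal solution of ψ'(r) = -(1/(k(1-r²)))(ψ(r)²+1)(√(1-r²)ψ(r)² - (n-1)(r-R)ψ(r) + √(1-r²)). Suppose there exists r₀ in the domain with r₀ ∈ (-1,a] and ψ(r₀) < η₁(r₀), or r₀ ∈ (a,1) and ψ(r₀) < 0. Then there exists r₁ ∈ (r₀,1) such that ψ(r) → -∞ as r ↑ r₁ (in particular ψ blows up to -∞ before reaching r = 1). -/

import Mathlib

noncomputable def Bq (n : ℕ) (R r : ℝ) : ℝ :=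
  (((n : ℝ) - 1) ^ 2 + 4) * r ^ 2 - 2 * ((n : ℝ) - 1) ^ 2 * R * r + ((n : ℝ) - 1) ^ 2 * R ^ 2 - 4

noncomputable def rootA (n : ℕ) (R : ℝ) : ℝ :=
  (((n : ℝ) - 1) ^ 2 * R - 2 * Real.sqrt (((n : ℝ) - 1) ^ 2 * (1 - R ^ 2) + 4)) / (((n : ℝ) - 1) ^ 2 + 4)

noncomputable def rootB (n : ℕ) (R : ℝ) : ℝ :=
  (((n : ℝ) - 1) ^ 2 * R + 2 * Real.sqrt (((n : ℝ) - 1) ^ 2 * (1 - R ^ 2) + 4)) / (((n : ℝ) - 1) ^ 2 + 4)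

noncomputable def Aq (n : ℕ) (R x r : ℝ) : ℝ :=
  Real.sqrt (1 - r ^ 2) * x ^ 2 - ((n : ℝ) - 1) * (r - R) * x + Real.sqrt (1 - r ^ 2)

noncomputable def eta1 (n : ℕ) (R r : ℝ) : ℝ :=
  (((n : ℝ) - 1) * (r - R) - Real.sqrt (Bq n R r)) / (2 * Real.sqrt (1 - r ^ 2))

noncomputable def eta2 (n : ℕ) (R r : ℝ) : ℝ :=
  (((n : ℝ) - 1) * (r - R) + Real.sqrt (Bq n R r)) / (2 * Real.sqrt (1 - r ^ 2))

noncomputable def Phi (n k : ℕ) (R r p : ℝ) : ℝ :=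
  -(1 / ((k : ℝ) * (1 - r ^ 2))) * (p ^ 2 + 1) *
    (Real.sqrt (1 - r ^ 2) * p ^ 2 - ((n : ℝ) - 1) * (r - R) * p + Real.sqrt (1 - r ^ 2))

section Alg
variable {n : ℕ} {R r p : ℝ}

lemma Phi_eq (n k : ℕ) (R r p : ℝ) :
    Phi n k R r p = -(1 / ((k : ℝ) * (1 - r ^ 2))) * (p ^ 2 + 1) * Aq n R p r := rfl

lemma m_one (hn : 2 ≤ n) : 1 ≤ (n : ℝ) - 1 := by
  have : (2 : ℝ) ≤ n := by exact_mod_cast hn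
  linarith

lemma sqrtD_sq (hR1 : -1 < R) (hR2 : R < 1) :
    Real.sqrt (((n : ℝ) - 1) ^ 2 * (1 - R ^ 2) + 4) ^ 2
      = ((n : ℝ) - 1) ^ 2 * (1 - R ^ 2) + 4 := by
  have hR : 0 ≤ 1 - R^2 := by nlinarith
  apply Real.sq_sqrt
  nlinarith [mul_nonneg (sq_nonneg ((n:ℝ)-1)) hR]

lemma sqrtD_ge_two (hR1 : -1 < R) (hR2 : R < 1) :
    2 ≤ Real.sqrt (((n : ℝ) - 1) ^ 2 * (1 - R ^ 2) + 4) := by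
  rw [show (2:ℝ) = Real.sqrt 4 by rw [show (4:ℝ) = 2^2 by norm_num, Real.sqrt_sq]; norm_num]
  have hR : 0 ≤ 1 - R^2 := by nlinarith
  apply Real.sqrt_le_sqrt
  nlinarith [mul_nonneg (sq_nonneg ((n:ℝ)-1)) hR]

lemma rootA_lt_R (hn : 2 ≤ n) (hR1 : -1 < R) (hR2 : R < 1) : rootA n R < R := by
  have hm := m_one hn
  have hs := sqrtD_ge_two (n := n) hR1 hR2
  rw [rootA, div_lt_iff₀ (by nlinarith)]
  nlinarith

lemma rootA_lt_one (hn : 2 ≤ n) (hR1 : -1 < R) (hR2 : R < 1) : rootA n R < 1 := by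
  have hm := m_one hn
  have hs := sqrtD_ge_two (n := n) hR1 hR2
  rw [rootA, div_lt_iff₀ (by nlinarith)]
  nlinarith [sq_nonneg ((n:ℝ)-1)]

lemma Bq_factor (hn : 2 ≤ n) (hR1 : -1 < R) (hR2 : R < 1) :
    (((n:ℝ)-1)^2 + 4) * Bq n R r
      = ((((n:ℝ)-1)^2 + 4) * r - ((n:ℝ)-1)^2 * R) ^ 2
        - 4 * (((n:ℝ)-1)^2 * (1 - R^2) + 4) := by
  rw [Bq]; ring

lemma Bq_neg (hn : 2 ≤ n) (hR1 : -1 < R) (hR2 : R < 1) (h1 : rootA n R < r) (h2 : r < R) :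
    Bq n R r < 0 := by
  have hm := m_one hn
  have hs := sqrtD_ge_two (n := n) hR1 hR2
  have hs2 := sqrtD_sq (n := n) hR1 hR2
  set s := Real.sqrt (((n : ℝ) - 1) ^ 2 * (1 - R ^ 2) + 4) with hsdef
  have hA : (((n:ℝ)-1)^2 * R - 2 * s) < (((n:ℝ)-1)^2 + 4) * r := by
    rw [rootA, div_lt_iff₀ (by nlinarith)] at h1
    linarith [h1]
  have hfac := Bq_factor (n := n) (R := R) (r := r) hn hR1 hR2
  have hu4 : (((n:ℝ)-1)^2 + 4) * r - ((n:ℝ)-1)^2 * R < 2 * s := by nlinarith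
  have hl : -(2*s) < (((n:ℝ)-1)^2 + 4) * r - ((n:ℝ)-1)^2 * R := by linarith
  nlinarith [mul_pos (by linarith : (0:ℝ) < 2*s - ((((n:ℝ)-1)^2 + 4) * r - ((n:ℝ)-1)^2 * R)) (by linarith : (0:ℝ) < 2*s + ((((n:ℝ)-1)^2 + 4) * r - ((n:ℝ)-1)^2 * R)), sq_nonneg ((n:ℝ)-1)]

lemma Bq_nonneg (hn : 2 ≤ n) (hR1 : -1 < R) (hR2 : R < 1) (h1 : r ≤ rootA n R) :
    0 ≤ Bq n R r := by
  have hm := m_one hn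
  have hs := sqrtD_ge_two (n := n) hR1 hR2
  have hs2 := sqrtD_sq (n := n) hR1 hR2
  set s := Real.sqrt (((n : ℝ) - 1) ^ 2 * (1 - R ^ 2) + 4) with hsdef
  have hA : (((n:ℝ)-1)^2 + 4) * r ≤ (((n:ℝ)-1)^2 * R - 2 * s) := by
    rw [rootA, le_div_iff₀ (by nlinarith)] at h1
    linarith [h1]
  have hfac := Bq_factor (n := n) (R := R) (r := r) hn hR1 hR2
  have hu : (((n:ℝ)-1)^2 + 4) * r - ((n:ℝ)-1)^2 * R ≤ -(2*s) := by linarith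
  nlinarith [mul_nonneg (by linarith : (0:ℝ) ≤ -(2*s) - ((((n:ℝ)-1)^2 + 4) * r - ((n:ℝ)-1)^2 * R)) (by linarith : (0:ℝ) ≤ -(2*s) + -((((n:ℝ)-1)^2 + 4) * r - ((n:ℝ)-1)^2 * R)), sq_nonneg ((n:ℝ)-1)]

end Alg

section Alg2
variable {n : ℕ} {R r p : ℝ}

lemma sigma_pos (h1 : -1 < r) (h2 : r < 1) : 0 < Real.sqrt (1 - r ^ 2) :=
  Real.sqrt_pos.2 (by nlinarith)

lemma sigma_sq (h1 : -1 < r) (h2 : r < 1) : Real.sqrt (1 - r ^ 2) ^ 2 = 1 - r ^ 2 :=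
  Real.sq_sqrt (by nlinarith)

lemma Aq_pos_zone2 (hn : 2 ≤ n) (hR1 : -1 < R) (hR2 : R < 1) (h1 : -1 < r) (h2 : r < 1)
    (hA : rootA n R < r) (hp : p ≤ 0) : 0 < Aq n R p r := by
  have hm := m_one hn
  have hσ := sigma_pos h1 h2
  have hσ2 := sigma_sq h1 h2
  rw [Aq]
  rcases le_or_gt R r with hrR | hrR
  · nlinarith [mul_nonneg (mul_nonneg (by linarith : (0:ℝ) ≤ (n:ℝ)-1) (by linarith : (0:ℝ) ≤ r - R)) (by linarith : (0:ℝ) ≤ -p), mul_nonneg hσ.le (sq_nonneg p)]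
  · have hB := Bq_neg hn hR1 hR2 hA hrR
    have hBe : (((n:ℝ)-1) * (r - R))^2 - 4 * (1 - r^2) = Bq n R r := by rw [Bq]; ring
    nlinarith [sq_nonneg (2 * Real.sqrt (1 - r^2) * p - ((n:ℝ)-1) * (r - R))]

lemma Aq_pos_zone1 (hB : 0 ≤ Bq n R r) (h1 : -1 < r) (h2 : r < 1)
    (hp : p < eta1 n R r) : 0 < Aq n R p r := by
  have hσ := sigma_pos h1 h2
  have hσ2 := sigma_sq h1 h2
  have hsB : Real.sqrt (Bq n R r) ^ 2 = Bq n R r := Real.sq_sqrt hB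
  have hsB0 : 0 ≤ Real.sqrt (Bq n R r) := Real.sqrt_nonneg _
  rw [eta1, lt_div_iff₀ (by linarith)] at hp
  have hBe : (((n:ℝ)-1) * (r - R))^2 - 4 * (1 - r^2) = Bq n R r := by rw [Bq]; ring
  rw [Aq]
  nlinarith [sq_nonneg (((n:ℝ)-1) * (r - R) - 2 * Real.sqrt (1 - r^2) * p)]

lemma Aq_eta1 (hB : 0 ≤ Bq n R r) (h1 : -1 < r) (h2 : r < 1) :
    Aq n R (eta1 n R r) r = 0 := by
  have hσ := sigma_pos h1 h2
  have hσ2 := sigma_sq h1 h2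
  have hsB : Real.sqrt (Bq n R r) ^ 2 = Bq n R r := Real.sq_sqrt hB
  have hBe : Bq n R r = (((n:ℝ)-1) * (r - R))^2 - 4 * (1 - r^2) := by rw [Bq]; ring
  rw [Aq, eta1]
  field_simp
  nlinarith [hσ2, hsB]

lemma eta1_neg (hn : 2 ≤ n) (hR1 : -1 < R) (hR2 : R < 1) (h1 : -1 < r) (h2 : r < 1)
    (hA : r ≤ rootA n R) : eta1 n R r < 0 := by
  have hm := m_one hn
  have hσ := sigma_pos h1 h2
  have hrR : r < R := lt_of_le_of_lt hA (rootA_lt_R hn hR1 hR2)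
  rw [eta1]
  apply div_neg_of_neg_of_pos _ (by linarith)
  have := Real.sqrt_nonneg (Bq n R r)
  nlinarith

lemma Phi_neg {k : ℕ} (hk : 1 ≤ k) (h1 : -1 < r) (h2 : r < 1)
    (hA : 0 < Aq n R p r) : Phi n k R r p < 0 := by
  rw [Phi_eq]
  have hk' : (1:ℝ) ≤ k := by exact_mod_cast hk
  have hr : (0:ℝ) < 1 - r^2 := by nlinarith
  have h3 : 0 < (k:ℝ) * (1 - r^2) := mul_pos (by linarith) hr
  have h4 : 0 < 1 / ((k:ℝ) * (1 - r^2)) := by positivity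
  nlinarith [sq_nonneg p, mul_pos (mul_pos h4 (by nlinarith : (0:ℝ) < p^2+1)) hA]

end Alg2

set_option maxHeartbeats 1000000 in
lemma Phi_lipschitz (n k : ℕ) (hn : 2 ≤ n) (hk : 1 ≤ k) (R δ P : ℝ) (hδ : 0 < δ) (hP : 0 ≤ P) :
    ∃ K : NNReal, ∀ t : ℝ, δ ≤ 1 - t^2 →
      LipschitzOnWith K (fun p => Phi n k R t p) (Set.Icc (-P) P) := by
  have hm := m_one hn
  have hk' : (1:ℝ) ≤ k := by exact_mod_cast hk
  set B := ((n:ℝ)-1)*(1+|R|) with hBdef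
  have hB0 : 0 ≤ B := mul_nonneg (by linarith) (by positivity)
  set C := 4*P^3 + 3*B*P^2 + 4*P + B with hCdef
  have hC0 : 0 ≤ C := by positivity
  have hKpos : (0:ℝ) ≤ C/δ := by positivity
  refine ⟨(C/δ).toNNReal, ?_⟩
  intro t ht
  rw [lipschitzOnWith_iff_dist_le_mul]
  intro p hp q hq
  rw [Real.dist_eq, Real.dist_eq]
  have hp1 : |p| ≤ P := abs_le.2 ⟨hp.1, hp.2⟩
  have hq1 : |q| ≤ P := abs_le.2 ⟨hq.1, hq.2⟩
  have ht2 : t^2 ≤ 1 := by nlinarith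
  have hσ0 : 0 ≤ Real.sqrt (1-t^2) := Real.sqrt_nonneg _
  have hσ1 : Real.sqrt (1-t^2) ≤ 1 := Real.sqrt_le_one.mpr (by nlinarith [sq_nonneg t])
  have htabs : |t| ≤ 1 := abs_le.2 ⟨by nlinarith, by nlinarith⟩
  have htR : |((n:ℝ)-1)*(t-R)| ≤ B := by
    rw [abs_mul, abs_of_nonneg (by linarith : (0:ℝ) ≤ (n:ℝ)-1), hBdef]
    have h1 : |t - R| ≤ |t| + |R| := abs_sub _ _
    have h2 : |t - R| ≤ 1 + |R| := by linarith
    nlinarith [abs_nonneg (t-R)]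
  set σ := Real.sqrt (1-t^2) with hσdef
  set β := ((n:ℝ)-1)*(t-R) with hβdef
  have hα : (0:ℝ) < (k:ℝ)*(1-t^2) := mul_pos (by linarith) (by linarith)
  have hα2 : 1/((k:ℝ)*(1-t^2)) ≤ 1/δ := by
    apply one_div_le_one_div_of_le hδ
    nlinarith
  have hα0 : 0 < 1/((k:ℝ)*(1-t^2)) := by positivity
  set G := σ*(p^3+p^2*q+p*q^2+q^3) - β*(p^2+p*q+q^2) + 2*σ*(p+q) - β with hGdef
  have hdiff : Phi n k R t p - Phi n k R t q = -(1/((k:ℝ)*(1-t^2))) * ((p-q) * G) := by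
    simp only [Phi, hGdef, hβdef, hσdef]; ring
  have cube : ∀ u v : ℝ, |u| ≤ P → |v| ≤ P → |u^2 * v| ≤ P^3 := by
    intro u v hu hv
    rw [abs_mul, abs_pow]
    nlinarith [abs_nonneg u, abs_nonneg v, sq_nonneg (|u| - P)]
  have sq' : ∀ u v : ℝ, |u| ≤ P → |v| ≤ P → |u * v| ≤ P^2 := by
    intro u v hu hv
    rw [abs_mul]
    nlinarith [abs_nonneg u, abs_nonneg v]
  have hsum3 : |p^3+p^2*q+p*q^2+q^3| ≤ 4*P^3 := by
    have l1 : |p^3| ≤ P^3 := by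
      have := cube p p hp1 hp1; rwa [show p^2*p = p^3 by ring] at this
    have l2 : |p^2*q| ≤ P^3 := cube p q hp1 hq1
    have l3 : |p*q^2| ≤ P^3 := by
      have := cube q p hq1 hp1; rwa [show q^2*p = p*q^2 by ring] at this
    have l4 : |q^3| ≤ P^3 := by
      have := cube q q hq1 hq1; rwa [show q^2*q = q^3 by ring] at this
    calc |p^3+p^2*q+p*q^2+q^3| ≤ |p^3+p^2*q+p*q^2| + |q^3| := abs_add_le _ _
      _ ≤ |p^3+p^2*q| + |p*q^2| + |q^3| := by linarith [abs_add_le (p^3+p^2*q) (p*q^2)]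
      _ ≤ |p^3| + |p^2*q| + |p*q^2| + |q^3| := by linarith [abs_add_le (p^3) (p^2*q)]
      _ ≤ 4*P^3 := by linarith
  have hsum2 : |p^2+p*q+q^2| ≤ 3*P^2 := by
    have l1 : |p^2| ≤ P^2 := by
      have := sq' p p hp1 hp1; rwa [show p*p = p^2 by ring] at this
    have l2 : |p*q| ≤ P^2 := sq' p q hp1 hq1
    have l3 : |q^2| ≤ P^2 := by
      have := sq' q q hq1 hq1; rwa [show q*q = q^2 by ring] at this
    calc |p^2+p*q+q^2| ≤ |p^2+p*q| + |q^2| := abs_add_le _ _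
      _ ≤ |p^2| + |p*q| + |q^2| := by linarith [abs_add_le (p^2) (p*q)]
      _ ≤ 3*P^2 := by linarith
  have hsum1 : |p+q| ≤ 2*P := by
    calc |p+q| ≤ |p| + |q| := abs_add_le _ _
      _ ≤ 2*P := by linarith
  have hGbound : |G| ≤ C := by
    have t1 : |σ*(p^3+p^2*q+p*q^2+q^3)| ≤ 4*P^3 := by
      rw [abs_mul, abs_of_nonneg hσ0]
      nlinarith [abs_nonneg (p^3+p^2*q+p*q^2+q^3)]
    have t2 : |β*(p^2+p*q+q^2)| ≤ 3*B*P^2 := by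
      rw [abs_mul]
      nlinarith [abs_nonneg β, abs_nonneg (p^2+p*q+q^2)]
    have t3 : |2*σ*(p+q)| ≤ 4*P := by
      rw [abs_mul, abs_mul, abs_of_nonneg hσ0, abs_of_nonneg (by norm_num : (0:ℝ) ≤ (2:ℝ))]
      nlinarith [abs_nonneg (p+q)]
    calc |G| = |(σ*(p^3+p^2*q+p*q^2+q^3) - β*(p^2+p*q+q^2) + 2*σ*(p+q)) + -β| := by
          rw [hGdef]; ring_nf
      _ ≤ |σ*(p^3+p^2*q+p*q^2+q^3) - β*(p^2+p*q+q^2) + 2*σ*(p+q)| + |(-β)| := abs_add_le _ _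
      _ ≤ |σ*(p^3+p^2*q+p*q^2+q^3) - β*(p^2+p*q+q^2)| + |2*σ*(p+q)| + |β| := by
          rw [abs_neg]; linarith [abs_add_le (σ*(p^3+p^2*q+p*q^2+q^3) - β*(p^2+p*q+q^2)) (2*σ*(p+q))]
      _ ≤ |σ*(p^3+p^2*q+p*q^2+q^3)| + |β*(p^2+p*q+q^2)| + |2*σ*(p+q)| + |β| := by
          have h := abs_sub (σ*(p^3+p^2*q+p*q^2+q^3)) (β*(p^2+p*q+q^2))
          linarith
      _ ≤ C := by rw [hCdef]; linarith
  have key : |Phi n k R t p - Phi n k R t q| ≤ (C/δ) * |p - q| := by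
    rw [hdiff, abs_mul, abs_neg, abs_mul]
    rw [abs_of_pos hα0]
    have h1 : |p-q| * |G| ≤ |p-q| * C := by
      apply mul_le_mul_of_nonneg_left hGbound (abs_nonneg _)
    calc 1/((k:ℝ)*(1-t^2)) * (|p-q| * |G|) ≤ (1/δ) * (|p-q| * C) := by
          apply mul_le_mul hα2 h1 (by positivity) (by positivity)
      _ = (C/δ) * |p-q| := by ring
  rw [Real.coe_toNNReal _ hKpos]
  exact key

lemma Phi_contDiffAt (n k : ℕ) (R : ℝ) {r₀ p₀ : ℝ} (h1 : -1 < r₀) (h2 : r₀ < 1) (hk : 1 ≤ k) :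
    ContDiffAt ℝ 1 (fun q : ℝ × ℝ => Phi n k R q.1 q.2) (r₀, p₀) := by
  have hk' : (1:ℝ) ≤ k := by exact_mod_cast hk
  have hr : (0:ℝ) < 1 - r₀^2 := by nlinarith
  have h1' : ContDiffAt ℝ 1 (fun q : ℝ × ℝ => 1 - q.1^2) (r₀, p₀) :=
    (contDiffAt_const (c := (1:ℝ))).sub ((contDiffAt_fst).pow 2)
  have hsq : ContDiffAt ℝ 1 (fun q : ℝ × ℝ => Real.sqrt (1 - q.1^2)) (r₀, p₀) :=
    ContDiffAt.comp (g := Real.sqrt) (r₀, p₀) (Real.contDiffAt_sqrt (by positivity)) h1'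
  have hinv : ContDiffAt ℝ 1 (fun q : ℝ × ℝ => 1 / ((k:ℝ) * (1 - q.1^2))) (r₀, p₀) := by
    have : ContDiffAt ℝ 1 (fun q : ℝ × ℝ => (k:ℝ) * (1 - q.1^2)) (r₀, p₀) :=
      contDiffAt_const.mul h1'
    have h := this.inv (by positivity); simp only [one_div]; exact h
  have hp2 : ContDiffAt ℝ 1 (fun q : ℝ × ℝ => q.2^2 + 1) (r₀, p₀) :=
    ((contDiffAt_snd).pow 2).add contDiffAt_const
  have hAq : ContDiffAt ℝ 1
      (fun q : ℝ × ℝ => Real.sqrt (1 - q.1^2) * q.2^2 - ((n:ℝ)-1) * (q.1 - R) * q.2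
        + Real.sqrt (1 - q.1^2)) (r₀, p₀) := by
    exact ((hsq.mul ((contDiffAt_snd).pow 2)).sub
      ((contDiffAt_const.mul (contDiffAt_fst.sub contDiffAt_const)).mul contDiffAt_snd)).add hsq
  have : ContDiffAt ℝ 1 (fun q : ℝ × ℝ =>
      -(1 / ((k:ℝ) * (1 - q.1^2))) * (q.2^2 + 1) *
        (Real.sqrt (1 - q.1^2) * q.2^2 - ((n:ℝ)-1) * (q.1 - R) * q.2
          + Real.sqrt (1 - q.1^2))) (r₀, p₀) := (hinv.neg.mul hp2).mul hAq
  exact this.congr_of_eventuallyEq (by filter_upwards with q; rw [Phi])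

lemma Phi_continuousAt (n k : ℕ) (R : ℝ) {r₀ p₀ : ℝ} (h1 : -1 < r₀) (h2 : r₀ < 1) (hk : 1 ≤ k) :
    ContinuousAt (fun q : ℝ × ℝ => Phi n k R q.1 q.2) (r₀, p₀) :=
  (Phi_contDiffAt n k R h1 h2 hk).continuousAt

lemma eta1_continuousAt (n : ℕ) (R : ℝ) {r : ℝ} (h1 : -1 < r) (h2 : r < 1) :
    ContinuousAt (eta1 n R) r := by
  have hσ := sigma_pos h1 h2
  have hnum : ContinuousAt (fun u => ((n:ℝ)-1) * (u - R) - Real.sqrt (Bq n R u)) r := by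
    apply ContinuousAt.sub
    · exact (continuousAt_const.mul (continuousAt_id.sub continuousAt_const))
    · have hBc : ContinuousAt (fun u => Bq n R u) r := by simp only [Bq]; fun_prop
      exact Real.continuous_sqrt.continuousAt.comp hBc
  have hden : ContinuousAt (fun u => 2 * Real.sqrt (1 - u^2)) r := by
    apply ContinuousAt.mul continuousAt_const
    exact Real.continuous_sqrt.continuousAt.comp (by fun_prop)
  have := hnum.div hden (by positivity)
  exact this.congr (by filter_upwards with u; simp only [Pi.div_apply, eta1])

open Topology Set Filter

set_option maxHeartbeats 1000000 in
lemma blowup_at_y (n k : ℕ) (hn : 2 ≤ n) (hk : 1 ≤ k) (R : ℝ)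
    (x y : ℝ) (hx : -1 ≤ x) (hxy : x < y) (hy1 : y < 1) (ψ : ℝ → ℝ)
    (hode : ∀ r ∈ Set.Ioo x y, HasDerivAt ψ (Phi n k R r (ψ r)) r)
    (hmax : ∀ x' y' : ℝ, ∀ g : ℝ → ℝ, x' ≤ x → y ≤ y' → Set.Ioo x y ⊂ Set.Ioo x' y' →
      Set.EqOn g ψ (Set.Ioo x y) →
      ¬ (∀ r ∈ Set.Ioo x' y', HasDerivAt g (Phi n k R r (g r)) r))
    (c₀ : ℝ) (hc₀ : c₀ ∈ Set.Ioo x y)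
    (hanti : AntitoneOn ψ (Set.Ioo c₀ y)) :
    Filter.Tendsto ψ (nhdsWithin y (Set.Iio y)) Filter.atBot := by
  by_contra hcon
  rw [tendsto_atBot] at hcon
  push_neg at hcon
  obtain ⟨b, hb⟩ := hcon
  simp only [← not_le] at hb
  have hbdd : ∀ t ∈ Set.Ioo c₀ y, b ≤ ψ t := by
    intro t ht
    have hmem : Set.Ioo t y ∈ 𝓝[<] y := Ioo_mem_nhdsLT_of_mem ⟨ht.2, le_refl y⟩
    obtain ⟨u, hu1, hu2⟩ :=
      (hb.and_eventually (Filter.eventually_of_mem hmem (fun _ h => h))).exists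
    push_neg at hu1
    exact le_trans hu1.le (hanti ⟨ht.1, ht.2⟩ ⟨lt_trans ht.1 hu2.1, hu2.2⟩ hu2.1.le)
  have hbddB : BddBelow (ψ '' Set.Ioo c₀ y) := by
    refine ⟨b, ?_⟩
    rintro v ⟨t, ht, rfl⟩
    exact hbdd t ht
  set L := sInf (ψ '' Set.Ioo c₀ y) with hLdef
  have hne : (Set.Ioo c₀ y).Nonempty := ⟨(c₀+y)/2, by constructor <;> linarith [hc₀.2, hc₀.1]⟩
  have htend : Tendsto ψ (𝓝[<] y) (𝓝 L) := hanti.tendsto_nhdsWithin_Ioo_left hne hbddB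
  have hLle : ∀ t ∈ Set.Ioo c₀ y, L ≤ ψ t := fun t ht => csInf_le hbddB ⟨t, ht, rfl⟩
  have hy0 : -1 < y := lt_of_le_of_lt hx hxy
  set F : ℝ × ℝ → ℝ × ℝ := fun q => (1, Phi n k R q.1 q.2) with hFdef
  have hFc : ContDiffAt ℝ 1 F (y, L) :=
    contDiffAt_const.prodMk (Phi_contDiffAt n k R hy0 hy1 hk)
  obtain ⟨f, hf0, ε, hε, hf⟩ := ContDiffAt.exists_forall_mem_closedBall_exists_eq_forall_mem_Ioo_hasDerivAt₀ hFc y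
  set δ1 := min (ε/2) ((y - c₀)/2) with hδ1def
  have hδ1pos : 0 < δ1 := lt_min (by linarith) (by linarith [hc₀.2])
  have hδ1a : δ1 ≤ ε/2 := min_le_left _ _
  have hδ1b : δ1 ≤ (y - c₀)/2 := min_le_right _ _
  set c := y - δ1 with hcdef
  have hcc₀ : c₀ < c := by simp only [hcdef]; linarith
  have hcy : c < y := by simp only [hcdef]; linarith
  have hcx : x < c := lt_trans hc₀.1 hcc₀
  have hcε : y - ε < c := by simp only [hcdef]; linarith
  have hc1 : -1 < c := lt_trans (lt_of_le_of_lt hx hc₀.1) hcc₀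
  have hc2 : c < 1 := lt_trans hcy hy1
  -- first coordinate of f is the identity
  have hfst : ∀ t ∈ Set.Ioo (y-ε) (y+ε), (f t).1 = t := by
    have hφd : ∀ t ∈ Set.Ioo (y-ε) (y+ε), HasDerivAt (fun u => (f u).1 - u) 0 t := by
      intro t ht
      have h1 : HasDerivAt (fun u => (f u).1) ((F (f t)).1) t :=
        (ContinuousLinearMap.fst ℝ ℝ ℝ).hasFDerivAt.comp_hasDerivAt t (hf t ht)
      have h2 : (F (f t)).1 = 1 := rfl
      rw [h2] at h1
      have h3 := h1.sub (hasDerivAt_id t); simp only [sub_self] at h3; exact h3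
    intro t ht
    have hφy : (f y).1 - y = 0 := by rw [hf0]; simp
    rcases le_total y t with hyt | hyt
    · have hIcc : Set.Icc y t ⊆ Set.Ioo (y-ε) (y+ε) := fun u hu =>
        ⟨by linarith [hu.1], lt_of_le_of_lt hu.2 ht.2⟩
      have := constant_of_has_deriv_right_zero
        (f := fun u => (f u).1 - u) (a := y) (b := t)
        (fun u hu => ((hφd u (hIcc hu)).continuousAt).continuousWithinAt)
        (fun u hu => (hφd u (hIcc (Set.Ico_subset_Icc_self hu))).hasDerivWithinAt)
        t ⟨hyt, le_refl t⟩
      have h2 : (f t).1 - t = (f y).1 - y := this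
      linarith [hφy, h2]
    · have hIcc : Set.Icc t y ⊆ Set.Ioo (y-ε) (y+ε) := fun u hu =>
        ⟨lt_of_lt_of_le ht.1 hu.1, by linarith [hu.2]⟩
      have := constant_of_has_deriv_right_zero
        (f := fun u => (f u).1 - u) (a := t) (b := y)
        (fun u hu => ((hφd u (hIcc hu)).continuousAt).continuousWithinAt)
        (fun u hu => (hφd u (hIcc (Set.Ico_subset_Icc_self hu))).hasDerivWithinAt)
        y ⟨hyt, le_refl y⟩
      have h2 : (f y).1 - y = (f t).1 - t := this
      linarith [hφy, h2]
  set f₂ : ℝ → ℝ := fun t => (f t).2 with hf₂def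
  have hf₂ : ∀ t ∈ Set.Ioo (y-ε) (y+ε), HasDerivAt f₂ (Phi n k R t (f₂ t)) t := by
    intro t ht
    have h1 : HasDerivAt (fun u => (f u).2) ((F (f t)).2) t :=
      (ContinuousLinearMap.snd ℝ ℝ ℝ).hasFDerivAt.comp_hasDerivAt t (hf t ht)
    have h2 : (F (f t)).2 = Phi n k R (f t).1 (f₂ t) := rfl
    rw [h2, hfst t ht] at h1
    exact h1
  have hf₂y : f₂ y = L := by simp only [hf₂def, hf0]
  -- bounds
  have hψbound : ∀ t ∈ Set.Ico c y, L ≤ ψ t ∧ ψ t ≤ ψ c := by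
    intro t ht
    have htmem : t ∈ Set.Ioo c₀ y := ⟨lt_of_lt_of_le hcc₀ ht.1, ht.2⟩
    exact ⟨hLle t htmem, hanti ⟨hcc₀, hcy⟩ htmem ht.1⟩
  have hf₂cont : ContinuousOn f₂ (Set.Icc c y) := by
    intro u hu
    have : u ∈ Set.Ioo (y-ε) (y+ε) := ⟨lt_of_lt_of_le hcε hu.1, by linarith [hu.2]⟩
    exact ((hf₂ u this).continuousAt).continuousWithinAt
  obtain ⟨P₂, hP₂⟩ := isCompact_Icc.exists_bound_of_continuousOn hf₂cont
  set P := |L| + |ψ c| + |P₂| + 1 with hPdef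
  have hPpos : 0 < P := by positivity
  have hψP : ∀ t ∈ Set.Ico c y, ψ t ∈ Set.Icc (-P) P := by
    intro t ht
    obtain ⟨h1, h2⟩ := hψbound t ht
    constructor
    · have := neg_abs_le L; simp only [hPdef]
      linarith [abs_nonneg (ψ c), abs_nonneg P₂, abs_nonneg L]
    · have := le_abs_self (ψ c); simp only [hPdef]
      linarith [abs_nonneg (ψ c), abs_nonneg P₂, abs_nonneg L]
  have hLP : L ∈ Set.Icc (-P) P := by
    constructor
    · have := neg_abs_le L; simp only [hPdef]
      linarith [abs_nonneg (ψ c), abs_nonneg P₂, abs_nonneg L]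
    · have := le_abs_self L; simp only [hPdef]
      linarith [le_abs_self L, abs_nonneg (ψ c), abs_nonneg P₂]
  have hf₂P : ∀ t ∈ Set.Icc c y, f₂ t ∈ Set.Icc (-P) P := by
    intro t ht
    have h := hP₂ t ht
    rw [Real.norm_eq_abs] at h
    have h' : |f₂ t| ≤ |P₂| := le_trans h (le_abs_self _)
    constructor
    · have := neg_abs_le (f₂ t); simp only [hPdef]; linarith [abs_nonneg L, abs_nonneg (ψ c)]
    · have := le_abs_self (f₂ t); simp only [hPdef]; linarith [abs_nonneg L, abs_nonneg (ψ c)]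
  -- Lipschitz setup
  set δ := min (1 - c^2) (1 - y^2) with hδdef
  have hδpos : 0 < δ := lt_min (by nlinarith) (by nlinarith)
  obtain ⟨K, hK⟩ := Phi_lipschitz n k hn hk R δ P hδpos hPpos.le
  set clamp : ℝ → ℝ := fun t => max c (min t y) with hclampdef
  have hclamp_mem : ∀ t, c ≤ clamp t ∧ clamp t ≤ y := by
    intro t
    constructor
    · exact le_max_left _ _
    · simp only [hclampdef]
      exact max_le hcy.le (min_le_right _ _)
  have hclamp_eq : ∀ t ∈ Set.Icc c y, clamp t = t := by
    intro t ht
    simp only [hclampdef]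
    rw [min_eq_left ht.2, max_eq_right ht.1]
  set v : ℝ → ℝ → ℝ := fun t p => Phi n k R (clamp t) p with hvdef
  have hv : ∀ t, LipschitzOnWith K (v t) (Set.Icc (-P) P) := by
    intro t
    apply hK
    obtain ⟨h1, h2⟩ := hclamp_mem t
    rcases le_total (clamp t) 0 with h3 | h3
    · have : (clamp t)^2 ≤ c^2 := by nlinarith
      have := min_le_left (1 - c^2) (1 - y^2)
      simp only [hδdef] at *
      linarith
    · have : (clamp t)^2 ≤ y^2 := by nlinarith [hy0]
      have := min_le_right (1 - c^2) (1 - y^2)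
      simp only [hδdef] at *
      linarith
  -- the extended-by-limit version of ψ
  set ψt : ℝ → ℝ := fun t => if t < y then ψ t else L with hψtdef
  have hψt_eq : ∀ t ∈ Set.Iio y, ψt t = ψ t := fun t ht => if_pos ht
  have hψty : ψt y = L := if_neg (lt_irrefl y)
  have hψt_deriv : ∀ t ∈ Set.Ioo c y, HasDerivAt ψt (Phi n k R t (ψt t)) t := by
    intro t ht
    have htx : t ∈ Set.Ioo x y := ⟨lt_trans hcx ht.1, ht.2⟩
    have heq : ψt =ᶠ[𝓝 t] ψ :=
      Filter.eventuallyEq_of_mem (Iio_mem_nhds ht.2) (fun u hu => if_pos hu)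
    rw [hψt_eq t ht.2]
    exact (hode t htx).congr_of_eventuallyEq heq
  have hψt_tendsto : Tendsto ψt (𝓝[<] y) (𝓝 L) := by
    apply htend.congr'
    filter_upwards [self_mem_nhdsWithin] with u hu
    exact (hψt_eq u hu).symm
  have hcwa : ContinuousWithinAt ψt (Set.Iic y) y := by
    unfold ContinuousWithinAt
    rw [hψty, ← Set.Iio_union_right, nhdsWithin_union, Filter.tendsto_sup]
    refine ⟨hψt_tendsto, ?_⟩
    rw [nhdsWithin_singleton]
    exact hψty ▸ tendsto_pure_nhds ψt y
  have hψt_deriv' : ∀ t ∈ Set.Ioo x y, HasDerivAt ψt (Phi n k R t (ψt t)) t := by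
    intro t ht
    have heq : ψt =ᶠ[𝓝 t] ψ :=
      Filter.eventuallyEq_of_mem (Iio_mem_nhds ht.2) (fun u hu => if_pos hu)
    rw [hψt_eq t ht.2]
    exact (hode t ht).congr_of_eventuallyEq heq
  have hψtcont : ContinuousOn ψt (Set.Icc c y) := by
    intro u hu
    rcases lt_or_eq_of_le hu.2 with h | h
    · exact ((hψt_deriv' u ⟨lt_of_lt_of_le hcx hu.1, h⟩).continuousAt).continuousWithinAt
    · rw [h]
      exact hcwa.mono Set.Icc_subset_Iic_self
  have hψt_endpoint : HasDerivWithinAt ψt (Phi n k R y L) (Set.Iic y) y := by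
    apply hasDerivWithinAt_Iic_of_tendsto_deriv (s := Set.Ioo c y)
    · intro u hu
      exact ((hψt_deriv u hu).differentiableAt).differentiableWithinAt
    · exact hcwa.mono (fun u hu => le_of_lt hu.2)
    · exact Ioo_mem_nhdsLT_of_mem ⟨hcy, le_refl y⟩
    · have hev : (fun u => Phi n k R u (ψ u)) =ᶠ[𝓝[<] y] (fun u => deriv ψt u) := by
        filter_upwards [Ioo_mem_nhdsLT_of_mem (Set.mem_Ioc.2 ⟨hcy, le_refl y⟩)] with u hu
        rw [(hψt_deriv u hu).deriv, hψt_eq u hu.2]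
      have hcomp : Tendsto (fun u => (u, ψ u)) (𝓝[<] y) (𝓝 (y, L)) :=
        Filter.Tendsto.prodMk_nhds (tendsto_id'.mpr nhdsWithin_le_nhds) htend
      have hlim0 := (Phi_continuousAt n k R hy0 hy1 hk).tendsto.comp hcomp
      have hlim : Tendsto (fun u => Phi n k R u (ψ u)) (𝓝[<] y) (𝓝 (Phi n k R y L)) :=
        hlim0.congr (fun u => rfl)
      exact hlim.congr' hev
  have huniq : Set.EqOn ψt f₂ (Set.Icc c y) := by
    apply ODE_solution_unique_of_mem_Icc_left (v := v) (s := fun _ => Set.Icc (-P) P)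
      (K := K) (fun t _ => hv t) hψtcont ?_ ?_ (hf₂cont) ?_ ?_ (by rw [hψty, hf₂y])
    · intro t ht
      rcases lt_or_eq_of_le ht.2 with h | h
      · have hvt : v t (ψt t) = Phi n k R t (ψt t) := by
          simp only [hvdef]; rw [hclamp_eq t ⟨ht.1.le, ht.2⟩]
        rw [hvt]
        exact (hψt_deriv t ⟨ht.1, h⟩).hasDerivWithinAt
      · subst h
        have hvt : v t (ψt t) = Phi n k R t L := by
          simp only [hvdef]; rw [hclamp_eq t ⟨ht.1.le, le_refl t⟩, hψty]
        rw [hvt]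
        exact hψt_endpoint
    · intro t ht
      rcases lt_or_eq_of_le ht.2 with h | h
      · rw [hψt_eq t h]
        exact hψP t ⟨ht.1.le, h⟩
      · rw [h, hψty]
        exact hLP
    · intro t ht
      have htf : t ∈ Set.Ioo (y-ε) (y+ε) :=
        ⟨lt_of_lt_of_le hcε (le_of_lt ht.1), by linarith [ht.2]⟩
      have hvt : v t (f₂ t) = Phi n k R t (f₂ t) := by
        simp only [hvdef]; rw [hclamp_eq t ⟨ht.1.le, ht.2⟩]
      rw [hvt]
      exact (hf₂ t htf).hasDerivWithinAt
    · intro t ht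
      exact hf₂P t ⟨ht.1.le, ht.2⟩
  -- glue and contradict maximality
  set g : ℝ → ℝ := fun t => if t < y then ψ t else f₂ t with hgdef
  have hgψ : Set.EqOn g ψ (Set.Ioo x y) := fun t ht => if_pos ht.2
  have hss : Set.Ioo x y ⊂ Set.Ioo x (y + δ1) := by
    constructor
    · exact Set.Ioo_subset_Ioo_right (by linarith)
    · intro hsub
      have : y ∈ Set.Ioo x y := hsub ⟨hxy, by linarith⟩
      exact lt_irrefl y this.2
  apply hmax x (y + δ1) g le_rfl (by linarith) hss hgψ
  intro t ht
  rcases lt_or_ge t y with h | h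
  · have heq : g =ᶠ[𝓝 t] ψ :=
      Filter.eventuallyEq_of_mem (Iio_mem_nhds h) (fun u hu => if_pos hu)
    rw [show g t = ψ t from if_pos h]
    exact (hode t ⟨ht.1, h⟩).congr_of_eventuallyEq heq
  · have hgf : ∀ u ∈ Set.Ioo c (y+ε), g u = f₂ u := by
      intro u hu
      rcases lt_or_ge u y with h2 | h2
      · have : g u = ψ u := if_pos h2
        rw [this, ← hψt_eq u h2]
        exact huniq ⟨hu.1.le, h2.le⟩
      · exact if_neg (not_lt.2 h2)
    have htmem : t ∈ Set.Ioo c (y+ε) :=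
      ⟨lt_of_lt_of_le hcy h, lt_of_lt_of_le ht.2 (by linarith)⟩
    have heq : g =ᶠ[𝓝 t] f₂ :=
      Filter.eventuallyEq_of_mem (Ioo_mem_nhds htmem.1 htmem.2) hgf
    rw [hgf t htmem]
    exact (hf₂ t ⟨by linarith [htmem.1], htmem.2⟩).congr_of_eventuallyEq heq

set_option maxHeartbeats 1000000 in
lemma zone2 (n k : ℕ) (hn : 2 ≤ n) (hk : 1 ≤ k) (R : ℝ) (hR1 : -1 < R) (hR2 : R < 1)
    (x y : ℝ) (hx : -1 ≤ x) (hy : y ≤ 1) (ψ : ℝ → ℝ)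
    (hode : ∀ r ∈ Set.Ioo x y, HasDerivAt ψ (Phi n k R r (ψ r)) r)
    (s : ℝ) (hs : s ∈ Set.Ioo x y) (hsA : rootA n R < s) (hψs : ψ s < 0) :
    (∀ t ∈ Set.Ico s y, ψ t < 0) ∧ StrictAntiOn ψ (Set.Ico s y) := by
  have hsub : Set.Ico s y ⊆ Set.Ioo x y := fun u hu => ⟨lt_of_lt_of_le hs.1 hu.1, hu.2⟩
  have hcont : ContinuousOn ψ (Set.Ico s y) := fun u hu =>
    ((hode u (hsub hu)).continuousAt).continuousWithinAt
  have hneg : ∀ t ∈ Set.Ico s y, ψ t < 0 := by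
    intro t ht
    by_contra hge
    push_neg at hge
    have hst : s < t := by
      rcases lt_or_eq_of_le ht.1 with h | h
      · exact h
      · exfalso; rw [← h] at hge; linarith
    set E := Set.Icc s t ∩ ψ ⁻¹' Set.Ici 0 with hEdef
    have hicc : Set.Icc s t ⊆ Set.Ioo x y := fun u hu =>
      ⟨lt_of_lt_of_le hs.1 hu.1, lt_of_le_of_lt hu.2 ht.2⟩
    have hEclosed : IsClosed E :=
      ContinuousOn.preimage_isClosed_of_isClosed
        (fun u hu => ((hode u (hicc hu)).continuousAt).continuousWithinAt)
        isClosed_Icc isClosed_Ici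
    have hEne : E.Nonempty := ⟨t, ⟨hst.le, le_refl t⟩, hge⟩
    have hEbdd : BddBelow E := ⟨s, fun u hu => hu.1.1⟩
    set c := sInf E with hcdef
    have hcE : c ∈ E := hEclosed.csInf_mem hEne hEbdd
    have hcs : s ≤ c := hcE.1.1
    have hsc : s < c := by
      rcases lt_or_eq_of_le hcs with h | h
      · exact h
      · exfalso
        have h0 : (0:ℝ) ≤ ψ c := hcE.2
        rw [← h] at h0
        linarith
    have hlt : ∀ u ∈ Set.Ico s c, ψ u < 0 := by
      intro u hu
      by_contra hge2
      push_neg at hge2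
      have : u ∈ E := ⟨⟨hu.1, le_trans hu.2.le hcE.1.2⟩, hge2⟩
      have := csInf_le hEbdd this
      linarith [hu.2]
    have hanti : StrictAntiOn ψ (Set.Icc s c) := by
      apply strictAntiOn_of_deriv_neg (convex_Icc s c)
      · intro u hu
        exact ((hode u (hicc ⟨hu.1, le_trans hu.2 hcE.1.2⟩)).continuousAt).continuousWithinAt
      · intro u hu
        rw [interior_Icc] at hu
        have hu1 : -1 < u := lt_trans (lt_of_le_of_lt hx hs.1) hu.1
        have hu2 : u < 1 := lt_of_lt_of_le (lt_of_lt_of_le hu.2 (le_trans hcE.1.2 ht.2.le)) hy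
        have hψu : ψ u < 0 := hlt u ⟨hu.1.le, hu.2⟩
        rw [(hode u (hicc ⟨hu.1.le, hu.2.le.trans hcE.1.2⟩)).deriv]
        exact Phi_neg hk hu1 hu2 (Aq_pos_zone2 hn hR1 hR2 hu1 hu2 (lt_trans hsA hu.1) hψu.le)
    have h1 : ψ c < ψ s := hanti ⟨le_refl s, hsc.le⟩ ⟨hsc.le, le_refl c⟩ hsc
    have h2 : (0:ℝ) ≤ ψ c := hcE.2
    linarith
  refine ⟨hneg, ?_⟩
  apply strictAntiOn_of_deriv_neg (convex_Ico s y) hcont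
  intro u hu
  rw [interior_Ico] at hu
  have hu1 : -1 < u := lt_trans (lt_of_le_of_lt hx hs.1) hu.1
  have hu2 : u < 1 := lt_of_lt_of_le hu.2 hy
  rw [(hode u (hsub ⟨hu.1.le, hu.2⟩)).deriv]
  exact Phi_neg hk hu1 hu2
    (Aq_pos_zone2 hn hR1 hR2 hu1 hu2 (lt_trans hsA hu.1) (hneg u ⟨hu.1.le, hu.2⟩).le)

set_option maxHeartbeats 1000000 in
lemma zone1 (n k : ℕ) (hn : 2 ≤ n) (hk : 1 ≤ k) (R : ℝ) (hR1 : -1 < R) (hR2 : R < 1)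
    (x y : ℝ) (hx : -1 ≤ x) (hy : y ≤ 1) (ψ : ℝ → ℝ)
    (hode : ∀ r ∈ Set.Ioo x y, HasDerivAt ψ (Phi n k R r (ψ r)) r)
    (r₀ : ℝ) (hr₀ : r₀ ∈ Set.Ioo x y) (hr₀A : r₀ ≤ rootA n R) (hψ0 : ψ r₀ < eta1 n R r₀) :
    ∀ t ∈ Set.Ico r₀ y, t ≤ rootA n R → ψ t < eta1 n R t := by
  have hm := m_one hn
  intro t ht htA
  by_contra hge
  push_neg at hge
  have hrt : r₀ < t := by
    rcases lt_or_eq_of_le ht.1 with h | h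
    · exact h
    · exfalso; rw [← h] at hge; linarith
  have hicc : Set.Icc r₀ t ⊆ Set.Ioo x y := fun u hu =>
    ⟨lt_of_lt_of_le hr₀.1 hu.1, lt_of_le_of_lt hu.2 ht.2⟩
  have hmem : ∀ u ∈ Set.Icc r₀ t, -1 < u ∧ u < 1 ∧ u ≤ rootA n R := fun u hu =>
    ⟨lt_of_le_of_lt hx (hicc hu).1, lt_of_lt_of_le (hicc hu).2 hy, le_trans hu.2 htA⟩
  have hψcont : ContinuousOn ψ (Set.Icc r₀ t) := fun u hu =>
    ((hode u (hicc hu)).continuousAt).continuousWithinAt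
  have hetacont : ContinuousOn (eta1 n R) (Set.Icc r₀ t) := fun u hu =>
    (eta1_continuousAt n R (hmem u hu).1 (hmem u hu).2.1).continuousWithinAt
  set E := Set.Icc r₀ t ∩ (fun u => ψ u - eta1 n R u) ⁻¹' Set.Ici 0 with hEdef
  have hEclosed : IsClosed E :=
    ContinuousOn.preimage_isClosed_of_isClosed (hψcont.sub hetacont) isClosed_Icc isClosed_Ici
  have hEne : E.Nonempty := ⟨t, ⟨hrt.le, le_refl t⟩, by simp; linarith⟩
  have hEbdd : BddBelow E := ⟨r₀, fun u hu => hu.1.1⟩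
  set c := sInf E with hcdef
  have hcE : c ∈ E := hEclosed.csInf_mem hEne hEbdd
  have hcmem : c ∈ Set.Icc r₀ t := hcE.1
  have hc1 : -1 < c := (hmem c hcmem).1
  have hc2 : c < 1 := (hmem c hcmem).2.1
  have hcA : c ≤ rootA n R := (hmem c hcmem).2.2
  have hrc : r₀ < c := by
    rcases lt_or_eq_of_le hcmem.1 with h | h
    · exact h
    · exfalso
      have h0 : (0:ℝ) ≤ ψ c - eta1 n R c := hcE.2
      rw [← h] at h0
      linarith
  have hlt : ∀ u ∈ Set.Ico r₀ c, ψ u < eta1 n R u := by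
    intro u hu
    by_contra hge2
    push_neg at hge2
    have : u ∈ E := ⟨⟨hu.1, le_trans hu.2.le hcmem.2⟩, by simp; linarith⟩
    have := csInf_le hEbdd this
    linarith [hu.2]
  have hle : ψ c ≤ eta1 n R c := by
    have hcw : ContinuousWithinAt (fun u => ψ u - eta1 n R u) (Set.Ico r₀ c) c := by
      apply ((hψcont.sub hetacont) c hcmem).mono
      exact fun u hu => ⟨hu.1, le_trans hu.2.le hcmem.2⟩
    have hneb : (𝓝[Set.Ico r₀ c] c).NeBot := by
      rw [← mem_closure_iff_nhdsWithin_neBot, closure_Ico (ne_of_lt hrc)]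
      exact ⟨hrc.le, le_refl c⟩
    have h0 : ψ c - eta1 n R c ≤ 0 :=
      le_of_tendsto hcw (Filter.eventually_of_mem self_mem_nhdsWithin
        (fun u hu => (sub_nonpos.2 (hlt u hu).le)))
    linarith
  have heq : ψ c = eta1 n R c := le_antisymm hle (by have h0 : (0:ℝ) ≤ ψ c - eta1 n R c := hcE.2; linarith)
  have hψc_neg : ψ c < 0 := by rw [heq]; exact eta1_neg hn hR1 hR2 hc1 hc2 hcA
  have hBc : 0 ≤ Bq n R c := Bq_nonneg hn hR1 hR2 hcA
  have hw0 : Aq n R (ψ c) c = 0 := by rw [heq]; exact Aq_eta1 hBc hc1 hc2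
  have hψd : HasDerivAt ψ 0 c := by
    have h := hode c (hicc hcmem)
    have h2 : Phi n k R c (ψ c) = 0 := by rw [Phi_eq, hw0]; ring
    rwa [h2] at h
  have hσ := sigma_pos hc1 hc2
  have hσ2 := sigma_sq hc1 hc2
  set σ := Real.sqrt (1 - c^2) with hσdef
  have hσne : σ ≠ 0 := ne_of_gt hσ
  have hinner : HasDerivAt (fun u : ℝ => 1 - u^2) (-(2*c^1)) c := by
    simpa using (hasDerivAt_pow 2 c).const_sub 1
  have hsqd : HasDerivAt (fun u : ℝ => Real.sqrt (1 - u^2)) (1/(2*σ) * -(2*c^1)) c := by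
    have h0 : (1 - c^2) ≠ 0 := by nlinarith
    have h3 := (Real.hasDerivAt_sqrt h0).comp c hinner
    exact h3
  have hlin : HasDerivAt (fun u => ((n:ℝ)-1)*(u-R)) ((n:ℝ)-1) c := by
    simpa using ((hasDerivAt_id c).sub_const R).const_mul ((n:ℝ)-1)
  have hψ2 := hψd.pow 2
  have hwd0 := ((hsqd.mul hψ2).sub (hlin.mul hψd)).add hsqd
  set W : ℝ := -(c/σ)*((ψ c)^2 + 1) - ((n:ℝ)-1)*(ψ c) with hWdef
  have hwd : HasDerivAt (fun u => Aq n R (ψ u) u) W c := by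
    simp only [Aq]
    refine hwd0.congr_deriv ?_
    simp only [Pi.pow_apply]
    rw [hWdef]
    field_simp
    ring
  have hcR : 0 < 1 - c*R := by
    nlinarith [mul_pos (by linarith : (0:ℝ) < 1-c) (by linarith : (0:ℝ) < 1+R),
      mul_pos (by linarith : (0:ℝ) < 1+c) (by linarith : (0:ℝ) < 1-R)]
  have hrel : σ*((ψ c)^2+1) = ((n:ℝ)-1)*(c-R)*(ψ c) := by
    have h4 : Aq n R (ψ c) c = σ*(ψ c)^2 - ((n:ℝ)-1)*(c-R)*(ψ c) + σ := rfl
    rw [h4] at hw0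
    linarith
  have hWpos : 0 < W := by
    have e1 : σ^2 * W = -c*(σ*((ψ c)^2+1)) - σ^2*(((n:ℝ)-1)*(ψ c)) := by
      rw [hWdef]; field_simp
    rw [hrel, hσ2] at e1
    have e2 : (1-c^2)*W = (-(((n:ℝ)-1) * ψ c)) * (1 - c*R) := by rw [e1]; ring
    have e3 : 0 < (-(((n:ℝ)-1) * ψ c)) * (1 - c*R) := by
      apply mul_pos _ hcR
      nlinarith
    have hc12 : (0:ℝ) < 1 - c^2 := by nlinarith
    have e4 : 0 < (1-c^2)*W := by rw [e2]; exact e3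
    nlinarith [e4, hc12]
  have hwpos : ∀ u ∈ Set.Ico r₀ c, 0 < Aq n R (ψ u) u := by
    intro u hu
    have humem : u ∈ Set.Icc r₀ t := ⟨hu.1, le_trans hu.2.le hcmem.2⟩
    exact Aq_pos_zone1 (Bq_nonneg hn hR1 hR2 (hmem u humem).2.2) (hmem u humem).1
      (hmem u humem).2.1 (hlt u hu)
  have hslope := hasDerivAt_iff_tendsto_slope.1 hwd
  have h2 : Filter.Tendsto (slope (fun u => Aq n R (ψ u) u) c) (𝓝[Set.Ioo r₀ c] c) (𝓝 W) :=
    hslope.mono_left (nhdsWithin_mono c (fun u hu => ne_of_lt hu.2))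
  have hneb : (𝓝[Set.Ioo r₀ c] c).NeBot := by
    rw [← mem_closure_iff_nhdsWithin_neBot, closure_Ioo (ne_of_lt hrc)]
    exact ⟨hrc.le, le_refl c⟩
  have hW0 : W ≤ 0 := by
    apply le_of_tendsto h2
    apply Filter.eventually_of_mem self_mem_nhdsWithin
    intro u hu
    rw [slope_def_field, hw0]
    rw [div_nonpos_iff]
    left
    constructor
    · linarith [hwpos u ⟨hu.1.le, hu.2⟩]
    · linarith [hu.2]
  linarith

set_option maxHeartbeats 1000000 in
lemma no_reach_one (n k : ℕ) (hn : 2 ≤ n) (hk : 1 ≤ k) (R : ℝ) (hR1 : -1 < R) (hR2 : R < 1)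
    (x : ℝ) (hx : -1 ≤ x) (ψ : ℝ → ℝ)
    (hode : ∀ r ∈ Set.Ioo x 1, HasDerivAt ψ (Phi n k R r (ψ r)) r)
    (s : ℝ) (hs : s ∈ Set.Ioo x 1) (hsA : rootA n R < s) (hψs : ψ s < 0) : False := by
  have hm := m_one hn
  have hk' : (1:ℝ) ≤ k := by exact_mod_cast hk
  obtain ⟨hneg, hanti⟩ := zone2 n k hn hk R hR1 hR2 x 1 hx le_rfl ψ hode s hs hsA hψs
  have hmax1 : max s R < 1 := max_lt hs.2 hR2
  set s' := (max s R + 1)/2 with hs'def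
  have hs's : s < s' := by
    have := le_max_left s R
    simp only [hs'def]; linarith
  have hs'R : R < s' := by
    have := le_max_right s R
    simp only [hs'def]; linarith
  have hs'1 : s' < 1 := by simp only [hs'def]; linarith
  have hs'x : x < s' := lt_trans hs.1 hs's
  have hs'mem : s' ∈ Set.Ico s 1 := ⟨hs's.le, hs'1⟩
  have hψs' : ψ s' < 0 := hneg s' hs'mem
  set M := -ψ s' with hMdef
  have hM0 : 0 < M := by simp only [hMdef]; linarith
  set γ := ((n:ℝ)-1)*(s'-R)*M/(2*k) with hγdef
  have hγ0 : 0 < γ := by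
    apply div_pos _ (by linarith)
    exact mul_pos (mul_pos (by linarith) (by linarith)) hM0
  set φ := fun r => (ψ r)⁻¹ + γ * Real.log (1 - r) with hφdef
  have hψle : ∀ r ∈ Set.Ico s' 1, ψ r ≤ -M := by
    intro r hr
    have h1 : ψ r ≤ ψ s' := by
      rcases lt_or_eq_of_le hr.1 with h | h
      · exact (hanti hs'mem ⟨le_trans hs's.le hr.1, hr.2⟩ h).le
      · rw [← h]
    simp only [hMdef]; linarith
  have hsub : Set.Ico s' 1 ⊆ Set.Ioo x 1 := fun u hu => ⟨lt_of_lt_of_le hs'x hu.1, hu.2⟩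
  -- derivative of φ
  have hφd : ∀ r ∈ Set.Ico s' 1, HasDerivAt φ
      ((-(Phi n k R r (ψ r)))/(ψ r)^2 + γ * ((1/(1-r)) * (-1))) r := by
    intro r hr
    have hψr : ψ r ≤ -M := hψle r hr
    have hψne : ψ r ≠ 0 := by linarith
    have hinv : HasDerivAt (fun u => (ψ u)⁻¹) (-(Phi n k R r (ψ r))/(ψ r)^2) r :=
      (hode r (hsub hr)).inv hψne
    have hlog0 : HasDerivAt (fun u : ℝ => 1 - u) (-1) r := by
      simpa using (hasDerivAt_id r).const_sub 1
    have hlog : HasDerivAt (fun u : ℝ => Real.log (1 - u)) ((1/(1-r)) * (-1)) r := by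
      have h1r : (1:ℝ) - r ≠ 0 := by
        have := hr.2; intro h; rw [sub_eq_zero] at h; linarith
      have := (Real.hasDerivAt_log h1r).comp r hlog0
      rw [one_div]; exact this
    exact hinv.add (hlog.const_mul γ)
  -- the derivative is nonnegative
  have hφpos : ∀ r ∈ Set.Ico s' 1,
      0 ≤ (-(Phi n k R r (ψ r)))/(ψ r)^2 + γ * ((1/(1-r)) * (-1)) := by
    intro r hr
    have hψr : ψ r ≤ -M := hψle r hr
    have hψne : ψ r ≠ 0 := by linarith
    have hq2 : (0:ℝ) < (ψ r)^2 := by positivity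
    have h1r : (0:ℝ) < 1 - r := by linarith [hr.2]
    have h1r' : (0:ℝ) < 1 + r := by
      have : -1 < r := lt_of_le_of_lt hx (lt_of_lt_of_le (lt_trans hs.1 hs's) hr.1)
      linarith
    set q := ψ r with hqdef
    set A := Aq n R q r with hAdef
    have hrA : rootA n R < r := lt_of_lt_of_le (lt_trans hsA hs's) hr.1
    have hr1 : -1 < r := by linarith
    have hAcM : ((n:ℝ)-1)*(s'-R)*M ≤ A := by
      have hσ0 := Real.sqrt_nonneg (1 - r^2)
      have h4 : A = Real.sqrt (1-r^2)*(q^2) - ((n:ℝ)-1)*(r-R)*q + Real.sqrt (1-r^2) := rfl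
      rw [h4]
      have h5 : ((n:ℝ)-1)*(s'-R)*M ≤ ((n:ℝ)-1)*(r-R)*(-q) := by
        have e1 : (0:ℝ) < (n:ℝ)-1 := by linarith
        have e2 : s'-R ≤ r-R := by linarith [hr.1]
        have e3 : M ≤ -q := by linarith
        have e4 : (0:ℝ) < s' - R := by linarith
        have e5 : (s'-R)*M ≤ (r-R)*(-q) := mul_le_mul e2 e3 hM0.le (by linarith)
        calc ((n:ℝ)-1)*(s'-R)*M = ((n:ℝ)-1)*((s'-R)*M) := by ring
          _ ≤ ((n:ℝ)-1)*((r-R)*(-q)) := mul_le_mul_of_nonneg_left e5 (by linarith)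
          _ = ((n:ℝ)-1)*(r-R)*(-q) := by ring
      nlinarith [mul_nonneg hσ0 (sq_nonneg q)]
    have hPhiv : -(Phi n k R r q) = (1/((k:ℝ)*(1-r^2)))*(q^2+1)*A := by
      rw [Phi_eq]; ring
    have hquot : γ/(1-r) ≤ (-(Phi n k R r q))/q^2 := by
      rw [div_le_div_iff₀ h1r hq2, hPhiv, hγdef, div_mul_eq_mul_div,
        div_le_iff₀ (by positivity : (0:ℝ) < 2*(k:ℝ))]
      have e : 1/((k:ℝ)*(1-r^2))*(q^2+1)*A*(1-r)*(2*(k:ℝ)) = (q^2+1)*A*(2/(1+r)) := by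
        have hkne : (k:ℝ) ≠ 0 := by linarith
        have h12 : (1:ℝ)-r^2 = (1-r)*(1+r) := by ring
        rw [h12]
        field_simp
      rw [e]
      have h1r2 : (1:ℝ) ≤ 2/(1+r) := by
        rw [le_div_iff₀ h1r']
        linarith [hr.2]
      have cM0 : (0:ℝ) < ((n:ℝ)-1)*(s'-R)*M :=
        mul_pos (mul_pos (by linarith) (by linarith)) hM0
      have t1 : (q^2+1)*A ≤ (q^2+1)*A*(2/(1+r)) := by
        apply le_mul_of_one_le_right _ h1r2
        nlinarith
      have t2 : ((n:ℝ)-1)*(s'-R)*M*q^2 ≤ ((n:ℝ)-1)*(s'-R)*M*(q^2+1) := by nlinarith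
      have t3 : ((n:ℝ)-1)*(s'-R)*M*(q^2+1) ≤ (q^2+1)*A := by nlinarith
      exact le_trans (le_trans t2 t3) t1
    have heq2 : γ * ((1/(1-r)) * (-1)) = -(γ/(1-r)) := by ring
    rw [heq2]
    linarith
  -- φ is monotone on [s', 1)
  have hφmono : MonotoneOn φ (Set.Ico s' 1) := by
    apply monotoneOn_of_deriv_nonneg (convex_Ico s' 1)
    · exact fun u hu => ((hφd u hu).continuousAt).continuousWithinAt
    · intro u hu
      rw [interior_Ico] at hu
      exact ((hφd u ⟨hu.1.le, hu.2⟩).differentiableAt).differentiableWithinAt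
    · intro u hu
      rw [interior_Ico] at hu
      rw [(hφd u ⟨hu.1.le, hu.2⟩).deriv]
      exact hφpos u ⟨hu.1.le, hu.2⟩
  -- contradiction
  set ee := Real.exp ((φ s')/γ - 1) with heedef
  have hee0 : 0 < ee := Real.exp_pos _
  set d := min (1 - s') ee with hddef
  have hd0 : 0 < d := lt_min (by linarith) hee0
  set rr := 1 - d/2 with hrrdef
  have hrrmem : rr ∈ Set.Ico s' 1 := by
    constructor
    · have : d ≤ 1 - s' := min_le_left _ _
      simp only [hrrdef]; linarith
    · simp only [hrrdef]; linarith
  have hmono2 : φ s' ≤ φ rr := hφmono ⟨le_refl s', hs'1⟩ hrrmem hrrmem.1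
  have hlog : Real.log (1 - rr) < (φ s')/γ - 1 := by
    have h1 : (1:ℝ) - rr = d/2 := by simp only [hrrdef]; ring
    rw [h1]
    have h2 : d/2 < ee := by
      have : d ≤ ee := min_le_right _ _
      linarith
    calc Real.log (d/2) < Real.log ee := Real.log_lt_log (by linarith) h2
      _ = (φ s')/γ - 1 := Real.log_exp _
  have hinvneg : (ψ rr)⁻¹ < 0 := by
    apply inv_neg''.2
    linarith [hψle rr hrrmem]
  have hcontr : φ rr < φ s' := by
    have h3 : γ * Real.log (1 - rr) < γ * ((φ s')/γ - 1) :=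
      mul_lt_mul_of_pos_left hlog hγ0
    have h4 : γ * ((φ s')/γ - 1) = φ s' - γ := by
      field_simp
    have h5 : φ rr = (ψ rr)⁻¹ + γ * Real.log (1 - rr) := rfl
    rw [h5]
    linarith
  linarith

set_option maxHeartbeats 1000000 in
theorem stmt_6 (n k : ℕ) (hn : 2 ≤ n) (hk : 1 ≤ k) (R : ℝ) (hR1 : -1 < R) (hR2 : R < 1)
    (x y : ℝ) (hx : -1 ≤ x) (hxy : x < y) (hy : y ≤ 1) (ψ : ℝ → ℝ)
    (hode : ∀ r ∈ Set.Ioo x y, HasDerivAt ψ (Phi n k R r (ψ r)) r)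
    (hmax : ∀ x' y' : ℝ, ∀ g : ℝ → ℝ, x' ≤ x → y ≤ y' → Set.Ioo x y ⊂ Set.Ioo x' y' →
      Set.EqOn g ψ (Set.Ioo x y) →
      ¬ (∀ r ∈ Set.Ioo x' y', HasDerivAt g (Phi n k R r (g r)) r))
    (r₀ : ℝ) (hr₀ : r₀ ∈ Set.Ioo x y)
    (hcase : (r₀ ∈ Set.Ioc (-1 : ℝ) (rootA n R) ∧ ψ r₀ < eta1 n R r₀) ∨
      (r₀ ∈ Set.Ioo (rootA n R) 1 ∧ ψ r₀ < 0)) :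
    ∃ r₁ ∈ Set.Ioo r₀ (1 : ℝ),
      Filter.Tendsto ψ (nhdsWithin r₁ (Set.Iio r₁)) Filter.atBot := by
  have hrA1 := rootA_lt_one hn hR1 hR2
  have tail : ∀ s, s ∈ Set.Ioo x y → rootA n R < s → ψ s < 0 →
      ∃ r₁ ∈ Set.Ioo r₀ (1:ℝ), Filter.Tendsto ψ (𝓝[<] r₁) Filter.atBot := by
    intro s hsmem hsA hψs
    have hy1 : y < 1 := by
      rcases lt_or_eq_of_le hy with h | h
      · exact h
      · subst h
        exact (no_reach_one n k hn hk R hR1 hR2 x hx ψ hode s hsmem hsA hψs).elim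
    obtain ⟨hneg, hanti⟩ := zone2 n k hn hk R hR1 hR2 x y hx hy ψ hode s hsmem hsA hψs
    have hanti' : AntitoneOn ψ (Set.Ioo s y) := by
      intro a ha b hb hab
      rcases lt_or_eq_of_le hab with h | h
      · exact (hanti ⟨ha.1.le, ha.2⟩ ⟨hb.1.le, hb.2⟩ h).le
      · rw [h]
    exact ⟨y, ⟨hr₀.2, hy1⟩,
      blowup_at_y n k hn hk R x y hx hxy hy1 ψ hode hmax s hsmem hanti'⟩
  rcases hcase with ⟨hr₀A, hψ0⟩ | ⟨hr₀A, hψ0⟩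
  · have hz1 := zone1 n k hn hk R hR1 hR2 x y hx hy ψ hode r₀ hr₀ hr₀A.2 hψ0
    rcases le_or_gt y (rootA n R) with hyA | hyA
    · -- everything inside zone 1; blow-up at y
      have hy1 : y < 1 := lt_of_le_of_lt hyA hrA1
      have hanti : AntitoneOn ψ (Set.Ioo r₀ y) := by
        have hstrict : StrictAntiOn ψ (Set.Ico r₀ y) := by
          apply strictAntiOn_of_deriv_neg (convex_Ico _ _)
          · intro u hu
            exact ((hode u ⟨lt_of_lt_of_le hr₀.1 hu.1, hu.2⟩).continuousAt).continuousWithinAt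
          · intro u hu
            rw [interior_Ico] at hu
            have hum : u ∈ Set.Ioo x y := ⟨lt_trans hr₀.1 hu.1, hu.2⟩
            have h1 : -1 < u := lt_of_le_of_lt hx hum.1
            have h2 : u < 1 := lt_trans hu.2 hy1
            have huA : u ≤ rootA n R := le_trans hu.2.le hyA
            rw [(hode u hum).deriv]
            exact Phi_neg hk h1 h2
              (Aq_pos_zone1 (Bq_nonneg hn hR1 hR2 huA) h1 h2 (hz1 u ⟨hu.1.le, hu.2⟩ huA))
        intro a ha b hb hab
        rcases lt_or_eq_of_le hab with h | h
        · exact (hstrict ⟨ha.1.le, ha.2⟩ ⟨hb.1.le, hb.2⟩ h).le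
        · rw [h]
      exact ⟨y, ⟨hr₀.2, hy1⟩,
        blowup_at_y n k hn hk R x y hx hxy hy1 ψ hode hmax r₀ hr₀ hanti⟩
    · -- cross rootA into zone 2
      have hAmem : rootA n R ∈ Set.Ioo x y := ⟨lt_of_lt_of_le hr₀.1 hr₀A.2, hyA⟩
      have hA1 : -1 < rootA n R := lt_of_le_of_lt hx hAmem.1
      have hψA0 : ψ (rootA n R) < 0 := by
        rcases lt_or_eq_of_le hr₀A.2 with h | h
        · have h5 := hz1 (rootA n R) ⟨hr₀A.2, hyA⟩ (le_refl _)
          linarith [eta1_neg hn hR1 hR2 hA1 hrA1 (le_refl _)]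
        · rw [← h]
          have := eta1_neg hn hR1 hR2 hr₀A.1 (lt_of_le_of_lt hr₀A.2 hrA1) hr₀A.2
          linarith
      have hcontA : ContinuousAt ψ (rootA n R) := (hode _ hAmem).continuousAt
      have hev : ∀ᶠ u in 𝓝 (rootA n R), ψ u < 0 :=
        hcontA.preimage_mem_nhds (Iio_mem_nhds hψA0)
      have hev' : ∀ᶠ u in 𝓝[>] (rootA n R), ψ u < 0 := hev.filter_mono nhdsWithin_le_nhds
      obtain ⟨s, hs1, hs2⟩ := (hev'.and (Filter.eventually_of_mem
        (Ioo_mem_nhdsGT_of_mem ⟨le_refl _, hyA⟩) (fun _ h => h))).exists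
      exact tail s ⟨lt_trans hAmem.1 hs2.1, hs2.2⟩ hs2.1 hs1
  · exact tail r₀ hr₀ hr₀A.1 hψ0
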